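/- Let M be the skew-symmetric regular (0,1/(n−1))-biangular matrix of order N = n(n−1) constructed from a Hadamard matrix of order n, and define (0,1)-matrices A_0 = I_N, A_1, A_2, A_3, A_4 by M = A_0 + A_1 − A_2 + A_3 − A_4, A_1 + A_2 = (J_{n−1} − I_{n−1}) ⊗ J_n, A_0 + A_3 + A_4 = I_{n−1} ⊗ J_n. Then {A_0, A_1, A_2, A_3, A_4} forms a nonsymmetric commutative association scheme of class 4 with A_1^T = A_2 and A_3, A_4 symmetric. -/

import Mathlib

open Matrix Finset

namespace NonsymAux

variable {n : ℕ}

/-- Embed a block-function as a big matrix. -/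
def emb (f : Fin (n-1) → Fin (n-1) → Matrix (Fin n) (Fin n) ℝ) :
    Matrix (Fin (n-1) × Fin n) (Fin (n-1) × Fin n) ℝ :=
  Matrix.of fun x y => f x.1 y.1 x.2 y.2

theorem emb_mul (f g : Fin (n-1) → Fin (n-1) → Matrix (Fin n) (Fin n) ℝ) :
    emb f * emb g = emb fun i j => ∑ k, f i k * g k j := by
  ext ⟨i,a⟩ ⟨j,b⟩
  simp only [emb, Matrix.of_apply, Matrix.mul_apply, Matrix.sum_apply, Fintype.sum_prod_type]

theorem emb_congr {f g : Fin (n-1) → Fin (n-1) → Matrix (Fin n) (Fin n) ℝ}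
    (h : ∀ i j, f i j = g i j) : emb f = emb g := by
  ext ⟨i,a⟩ ⟨j,b⟩; rw [emb, emb]; simp only [Matrix.of_apply]; rw [h]

theorem emb_smul (c : ℝ) (f : Fin (n-1) → Fin (n-1) → Matrix (Fin n) (Fin n) ℝ) :
    c • emb f = emb fun i j => c • f i j := rfl

theorem emb_add (f g : Fin (n-1) → Fin (n-1) → Matrix (Fin n) (Fin n) ℝ) :
    emb f + emb g = emb (fun i j => f i j + g i j) := rfl

theorem emb_sub (f g : Fin (n-1) → Fin (n-1) → Matrix (Fin n) (Fin n) ℝ) :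
    emb f - emb g = emb (fun i j => f i j - g i j) := rfl

theorem emb_zero : (emb (fun _ _ => 0) : Matrix (Fin (n-1) × Fin n) (Fin (n-1) × Fin n) ℝ) = 0 := rfl

theorem emb_one :
    (emb (fun i j => if i = j then (1 : Matrix (Fin n) (Fin n) ℝ) else 0)) = 1 := by
  ext ⟨i,a⟩ ⟨j,b⟩
  simp only [emb, Matrix.of_apply, Matrix.one_apply, Prod.mk.injEq]
  by_cases h : i = j <;> by_cases h' : a = b <;> simp [h, h', Matrix.one_apply]

theorem sum_row (C : Fin n → Matrix (Fin n) (Fin n) ℝ)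
    (hsumC : (∑ m, C m) = (n : ℝ) • 1) (z0 : Fin n)
    (f : Fin (n-1) → Fin n) (hf : Function.Injective f) (hf0 : ∀ k, f k ≠ z0) :
    ∑ k, C (f k) = (n : ℝ) • 1 - C z0 := by
  have himg : Finset.image f Finset.univ = Finset.univ.erase z0 := by
    apply Finset.eq_of_subset_of_card_le
    · intro m hm
      simp only [Finset.mem_image, Finset.mem_univ, true_and] at hm
      obtain ⟨k, rfl⟩ := hm
      exact Finset.mem_erase.2 ⟨hf0 k, Finset.mem_univ _⟩
    · rw [Finset.card_erase_of_mem (Finset.mem_univ _),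
        Finset.card_image_of_injective _ hf]
      simp
  calc ∑ k, C (f k) = ∑ m ∈ Finset.image f Finset.univ, C m :=
        (Finset.sum_image (fun a _ b _ h => hf h)).symm
    _ = ∑ m ∈ Finset.univ.erase z0, C m := by rw [himg]
    _ = (∑ m, C m) - C z0 := Finset.sum_erase_eq_sub (Finset.mem_univ z0)
    _ = (n : ℝ) • 1 - C z0 := by rw [hsumC]


section Table

variable (C : Fin n → Matrix (Fin n) (Fin n) ℝ) (ℓ : Fin (n - 1) → Fin (n - 1) → Fin n)

/-- block function of `I_{n-1} ⊗ J_n` -/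
def Df : Fin (n-1) → Fin (n-1) → Matrix (Fin n) (Fin n) ℝ :=
  fun i j => if i = j then Matrix.of (fun _ _ => (1:ℝ)) else 0

/-- block function of the all-ones matrix -/
def Jf : Fin (n-1) → Fin (n-1) → Matrix (Fin n) (Fin n) ℝ :=
  fun _ _ => Matrix.of (fun _ _ => (1:ℝ))

/-- block function of the off-diagonal (skew) part of `M` -/
def Sf : Fin (n-1) → Fin (n-1) → Matrix (Fin n) (Fin n) ℝ :=
  fun i j => if i = j then 0 else if i ≤ j then C (ℓ i j) else -C (ℓ i j)

/-- block function of the diagonal part of `M` -/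
def Pf : Fin (n-1) → Fin (n-1) → Matrix (Fin n) (Fin n) ℝ :=
  fun i j => if i = j then C (ℓ i i) else 0

/-- block function of the identity -/
def If : Fin (n-1) → Fin (n-1) → Matrix (Fin n) (Fin n) ℝ :=
  fun i j => if i = j then (1 : Matrix (Fin n) (Fin n) ℝ) else 0

theorem emb_If : (emb (If (n := n))) = 1 := emb_one

theorem Jn_mul_Jn :
    (Matrix.of (fun _ _ => (1:ℝ)) : Matrix (Fin n) (Fin n) ℝ) * Matrix.of (fun _ _ => (1:ℝ))
      = (n:ℝ) • Matrix.of (fun _ _ => (1:ℝ)) := by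
  ext a b
  simp [Matrix.mul_apply]

variable (z0 : Fin n) (hC1 : C z0 = Matrix.of fun _ _ => (1 : ℝ))
  (horth : ∀ i j, i ≠ j → C i * C j = 0)
  (hsq : ∀ i, C i * C i = (n : ℝ) • C i)
  (hsumC : (∑ i, C i) = (n : ℝ) • 1)
  (hℓsymm : ∀ i j, ℓ i j = ℓ j i)
  (hℓlatin : ∀ i, Function.Injective (ℓ i))
  (hℓ0 : ∀ i j, ℓ i j ≠ z0)

section
include hC1 horth hℓ0

theorem CJ_zero (i j : Fin (n-1)) : C (ℓ i j) * Matrix.of (fun _ _ => (1:ℝ)) = 0 := by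
  rw [← hC1]; exact horth _ _ (hℓ0 i j)

theorem JC_zero (i j : Fin (n-1)) : (Matrix.of (fun _ _ => (1:ℝ))) * C (ℓ i j) = 0 := by
  rw [← hC1]; exact horth _ _ (Ne.symm (hℓ0 i j))

end

theorem tDD : emb (Df (n := n)) * emb (Df (n := n)) = (n:ℝ) • emb (Df (n := n)) := by
  rw [emb_mul, emb_smul]
  refine emb_congr fun i j => ?_
  simp only [Df, ite_mul, mul_ite, zero_mul, mul_zero, Finset.sum_ite_eq, Finset.mem_univ,
    if_true]
  by_cases h : i = j <;> simp [h, Jn_mul_Jn]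

theorem tDJ : emb (Df (n := n)) * emb (Jf (n := n)) = (n:ℝ) • emb (Jf (n := n)) := by
  rw [emb_mul, emb_smul]
  refine emb_congr fun i j => ?_
  simp only [Df, Jf, ite_mul, zero_mul, Finset.sum_ite_eq, Finset.mem_univ, if_true]
  simp [Jn_mul_Jn]

theorem tJD : emb (Jf (n := n)) * emb (Df (n := n)) = (n:ℝ) • emb (Jf (n := n)) := by
  rw [emb_mul, emb_smul]
  refine emb_congr fun i j => ?_
  simp only [Df, Jf, mul_ite, mul_zero, Finset.sum_ite_eq', Finset.mem_univ, if_true]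
  simp [Jn_mul_Jn]

theorem tJJ : emb (Jf (n := n)) * emb (Jf (n := n)) = ((n-1:ℕ) * n : ℝ) • emb (Jf (n := n)) := by
  rw [emb_mul, emb_smul]
  refine emb_congr fun i j => ?_
  simp only [Jf, Jn_mul_Jn, Finset.sum_const, Finset.card_univ, Fintype.card_fin]
  rw [← Nat.cast_smul_eq_nsmul ℝ, smul_smul]

include hC1 horth hℓ0 in
theorem tPD : emb (Pf C ℓ) * emb (Df (n := n)) = 0 := by
  rw [emb_mul, ← emb_zero (n := n)]
  refine emb_congr fun i j => ?_
  simp only [Pf, Df, ite_mul, mul_ite, zero_mul, mul_zero, Finset.sum_ite_eq, Finset.mem_univ,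
    if_true]
  by_cases h : i = j <;> simp [h, CJ_zero C ℓ z0 hC1 horth hℓ0]

include hC1 horth hℓ0 in
theorem tDP : emb (Df (n := n)) * emb (Pf C ℓ) = 0 := by
  rw [emb_mul, ← emb_zero (n := n)]
  refine emb_congr fun i j => ?_
  simp only [Pf, Df, ite_mul, mul_ite, zero_mul, mul_zero, Finset.sum_ite_eq, Finset.mem_univ,
    if_true]
  by_cases h : i = j <;> simp [h, JC_zero C ℓ z0 hC1 horth hℓ0]

include hC1 horth hℓ0 in
theorem tPJ : emb (Pf C ℓ) * emb (Jf (n := n)) = 0 := by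
  rw [emb_mul, ← emb_zero (n := n)]
  refine emb_congr fun i j => ?_
  simp only [Pf, Jf, ite_mul, zero_mul, Finset.sum_ite_eq, Finset.mem_univ, if_true]
  simp [CJ_zero C ℓ z0 hC1 horth hℓ0]

include hC1 horth hℓ0 in
theorem tJP : emb (Jf (n := n)) * emb (Pf C ℓ) = 0 := by
  rw [emb_mul, ← emb_zero (n := n)]
  refine emb_congr fun i j => ?_
  simp only [Pf, Jf, mul_ite, mul_zero, Finset.sum_ite_eq', Finset.mem_univ, if_true]
  simp [JC_zero C ℓ z0 hC1 horth hℓ0]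

include hC1 horth hℓ0 in
theorem tSJ : emb (Sf C ℓ) * emb (Jf (n := n)) = 0 := by
  rw [emb_mul, ← emb_zero (n := n)]
  refine emb_congr fun i j => ?_
  refine Finset.sum_eq_zero fun k _ => ?_
  simp only [Sf, Jf]
  by_cases h : i = k
  · simp [h]
  · rw [if_neg h]
    split_ifs
    · exact CJ_zero C ℓ z0 hC1 horth hℓ0 i k
    · rw [neg_mul, CJ_zero C ℓ z0 hC1 horth hℓ0 i k, neg_zero]

include hC1 horth hℓ0 in
theorem tJS : emb (Jf (n := n)) * emb (Sf C ℓ) = 0 := by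
  rw [emb_mul, ← emb_zero (n := n)]
  refine emb_congr fun i j => ?_
  refine Finset.sum_eq_zero fun k _ => ?_
  simp only [Sf, Jf]
  by_cases h : k = j
  · simp [h]
  · rw [if_neg h]
    split_ifs
    · exact JC_zero C ℓ z0 hC1 horth hℓ0 k j
    · rw [mul_neg, JC_zero C ℓ z0 hC1 horth hℓ0 k j, neg_zero]

include hC1 horth hℓ0 in
theorem tSD : emb (Sf C ℓ) * emb (Df (n := n)) = 0 := by
  rw [emb_mul, ← emb_zero (n := n)]
  refine emb_congr fun i j => ?_
  simp only [Sf, Df, mul_ite, mul_zero, Finset.sum_ite_eq', Finset.mem_univ, if_true]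
  by_cases h : i = j
  · simp [h]
  · rw [if_neg h]
    split_ifs
    · exact CJ_zero C ℓ z0 hC1 horth hℓ0 i j
    · rw [neg_mul, CJ_zero C ℓ z0 hC1 horth hℓ0 i j, neg_zero]

include hC1 horth hℓ0 in
theorem tDS : emb (Df (n := n)) * emb (Sf C ℓ) = 0 := by
  rw [emb_mul, ← emb_zero (n := n)]
  refine emb_congr fun i j => ?_
  simp only [Sf, Df, ite_mul, zero_mul, Finset.sum_ite_eq, Finset.mem_univ, if_true]
  by_cases h : i = j
  · simp [h]
  · rw [if_neg h]
    split_ifs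
    · exact JC_zero C ℓ z0 hC1 horth hℓ0 i j
    · rw [mul_neg, JC_zero C ℓ z0 hC1 horth hℓ0 i j, neg_zero]

theorem tPP (hsq : ∀ i, C i * C i = (n : ℝ) • C i) :
    emb (Pf C ℓ) * emb (Pf C ℓ) = (n:ℝ) • emb (Pf C ℓ) := by
  rw [emb_mul, emb_smul]
  refine emb_congr fun i j => ?_
  simp only [Pf, ite_mul, mul_ite, zero_mul, mul_zero, Finset.sum_ite_eq, Finset.mem_univ,
    if_true]
  by_cases h : i = j
  · subst h; simp [hsq]
  · simp [h]

include horth hℓsymm hℓlatin in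
theorem tSP : emb (Sf C ℓ) * emb (Pf C ℓ) = 0 := by
  rw [emb_mul, ← emb_zero (n := n)]
  refine emb_congr fun i j => ?_
  refine Finset.sum_eq_zero fun k _ => ?_
  simp only [Sf, Pf, mul_ite, mul_zero]
  by_cases hk : k = j
  · subst hk
    by_cases h : i = k
    · simp [h]
    · have hne : ℓ k i ≠ ℓ k k := fun hh => h (hℓlatin k hh)
      rw [if_neg h, if_pos rfl, hℓsymm i k]
      split_ifs
      · exact horth _ _ hne
      · rw [neg_mul, horth _ _ hne, neg_zero]
  · simp [hk]

include horth hℓsymm hℓlatin in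
theorem tPS : emb (Pf C ℓ) * emb (Sf C ℓ) = 0 := by
  rw [emb_mul, ← emb_zero (n := n)]
  refine emb_congr fun i j => ?_
  refine Finset.sum_eq_zero fun k _ => ?_
  simp only [Sf, Pf, ite_mul, zero_mul]
  by_cases hk : i = k
  · subst hk
    by_cases h : i = j
    · simp [h]
    · have hne : ℓ i i ≠ ℓ i j := fun hh => h (hℓlatin i hh)
      rw [if_pos rfl, if_neg h]
      split_ifs
      · exact horth _ _ hne
      · rw [mul_neg, horth _ _ hne, neg_zero]
  · simp [hk]

include hC1 horth hsq hsumC hℓsymm hℓlatin hℓ0 in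
theorem tSS : emb (Sf C ℓ) * emb (Sf C ℓ) =
    (n:ℝ) • emb (Pf C ℓ) + (n:ℝ) • emb (Df (n := n)) - ((n:ℝ) * (n:ℝ)) • emb (If (n := n)) := by
  rw [emb_mul, emb_smul, emb_smul, emb_smul, emb_add, emb_sub]
  refine emb_congr fun i j => ?_
  by_cases hij : i = j
  · subst hij
    have step1 : ∀ k, Sf C ℓ i k * Sf C ℓ k i
        = if k = i then 0 else (-(n:ℝ)) • C (ℓ i k) := by
      intro k
      by_cases hk : k = i
      · simp [Sf, hk]
      · rw [if_neg hk]
        simp only [Sf, if_neg (fun h => hk h.symm : ¬ i = k), if_neg hk, hℓsymm k i]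
        rcases le_or_gt i k with h1 | h1
        · have h2 : ¬ k ≤ i := fun hh => hk (le_antisymm hh h1)
          rw [if_pos h1, if_neg h2, mul_neg, hsq, neg_smul]
        · have h2 : ¬ i ≤ k := not_le_of_gt h1
          rw [if_neg h2, if_pos (le_of_lt h1), neg_mul, hsq, neg_smul]
    rw [Finset.sum_congr rfl fun k _ => step1 k]
    have step2 : ∀ k, (if k = i then 0 else (-(n:ℝ)) • C (ℓ i k))
        = (-(n:ℝ)) • C (ℓ i k) - (if k = i then (-(n:ℝ)) • C (ℓ i k) else 0) := by
      intro k; by_cases hk : k = i <;> simp [hk]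
    rw [Finset.sum_congr rfl fun k _ => step2 k, Finset.sum_sub_distrib,
      Finset.sum_ite_eq' Finset.univ i (fun k => (-(n:ℝ)) • C (ℓ i k)),
      if_pos (Finset.mem_univ i), ← Finset.smul_sum,
      sum_row C hsumC z0 (ℓ i) (hℓlatin i) (hℓ0 i), hC1]
    simp only [Pf, Df, If, if_pos rfl, if_true]
    module
  · have : ∀ k, Sf C ℓ i k * Sf C ℓ k j = 0 := by
      intro k
      simp only [Sf]
      by_cases h1 : i = k
      · simp [h1]
      · by_cases h2 : k = j
        · simp [h2]
        · have hne : ℓ k i ≠ ℓ k j := fun hh => hij (hℓlatin k hh)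
          rw [if_neg h1, if_neg h2, hℓsymm i k]
          split_ifs
          all_goals simp [neg_mul, mul_neg, horth _ _ hne]
    rw [Finset.sum_eq_zero fun k _ => this k]
    simp [Pf, Df, If, hij]

end Table


section Span

variable {R A : Type*} [CommSemiring R] [Semiring A] [Algebra R A]

theorem span_mul_mem (s : Set A) (V : Submodule R A)
    (h : ∀ x ∈ s, ∀ y ∈ s, x * y ∈ V)
    {x y : A} (hx : x ∈ Submodule.span R s) (hy : y ∈ Submodule.span R s) :
    x * y ∈ V := by
  induction hx, hy using Submodule.span_induction₂ with
  | mem_mem a b ha hb => exact h a ha b hb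
  | zero_left y hy => rw [zero_mul]; exact V.zero_mem
  | zero_right x hx => rw [mul_zero]; exact V.zero_mem
  | add_left x y z _ _ _ h1 h2 => rw [add_mul]; exact V.add_mem h1 h2
  | add_right x y z _ _ _ h1 h2 => rw [mul_add]; exact V.add_mem h1 h2
  | smul_left r x y _ _ h1 => rw [smul_mul_assoc]; exact V.smul_mem r h1
  | smul_right r x y _ _ h1 => rw [mul_smul_comm]; exact V.smul_mem r h1

theorem span_mul_comm (s : Set A)
    (h : ∀ x ∈ s, ∀ y ∈ s, x * y = y * x)
    {x y : A} (hx : x ∈ Submodule.span R s) (hy : y ∈ Submodule.span R s) :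
    x * y = y * x := by
  induction hx, hy using Submodule.span_induction₂ with
  | mem_mem a b ha hb => exact h a ha b hb
  | zero_left y hy => rw [zero_mul, mul_zero]
  | zero_right x hx => rw [mul_zero, zero_mul]
  | add_left x y z _ _ _ h1 h2 => rw [add_mul, mul_add, h1, h2]
  | add_right x y z _ _ _ h1 h2 => rw [mul_add, add_mul, h1, h2]
  | smul_left r x y _ _ h1 => rw [smul_mul_assoc, mul_smul_comm, h1]
  | smul_right r x y _ _ h1 => rw [mul_smul_comm, smul_mul_assoc, h1]

end Span

end NonsymAux
open Matrix Finset
set_option maxHeartbeats 1000000 in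
/-- The decomposition of the skew-symmetric regular biangular matrix `M` (built
from the outer products `C_i` of a normalized Hadamard matrix of order `n` and a
symmetric Latin square on `{2,…,n}`) into `(0,1)`-matrices `A_0 = I, A_1, …, A_4`
via `M = A_0 + A_1 - A_2 + A_3 - A_4`, `A_1 + A_2 = (J_{n-1} - I_{n-1}) ⊗ J_n`,
`A_0 + A_3 + A_4 = I_{n-1} ⊗ J_n` yields a nonsymmetric commutative association
scheme of class 4: the matrices sum to `J`, satisfy `A_1ᵀ = A_2` with `A_3, A_4`
symmetric, and their products are nonnegative integer combinations of the `A_l`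
and commute. -/
theorem nonsymmetric_association_scheme_from_biangular (n : ℕ) (hn : 2 ≤ n)
    (C : Fin n → Matrix (Fin n) (Fin n) ℝ)
    (hsymm : ∀ i, (C i)ᵀ = C i)
    (hpm : ∀ i a b, C i a b = 1 ∨ C i a b = -1)
    (hC1 : C ⟨0, by omega⟩ = (Matrix.of fun _ _ => (1 : ℝ)))
    (horth : ∀ i j, i ≠ j → C i * C j = 0)
    (hsq : ∀ i, C i * C i = (n : ℝ) • C i)
    (hsumC : (∑ i, C i) = (n : ℝ) • 1)
    (ℓ : Fin (n - 1) → Fin (n - 1) → Fin n)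
    (hℓsymm : ∀ i j, ℓ i j = ℓ j i)
    (hℓlatin : ∀ i, Function.Injective (ℓ i))
    (hℓ0 : ∀ i j, ℓ i j ≠ ⟨0, by omega⟩)
    (M : Matrix (Fin (n - 1) × Fin n) (Fin (n - 1) × Fin n) ℝ)
    (hM : ∀ (i j : Fin (n - 1)) (a b : Fin n),
      M (i, a) (j, b) = if i ≤ j then C (ℓ i j) a b else -C (ℓ i j) a b)
    (A : Fin 5 → Matrix (Fin (n - 1) × Fin n) (Fin (n - 1) × Fin n) ℝ)
    (hA0 : A 0 = 1)
    (h01 : ∀ i x y, A i x y = 0 ∨ A i x y = 1)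
    (hdecomp : M = A 0 + A 1 - A 2 + A 3 - A 4)
    (h12 : A 1 + A 2 = Matrix.of (fun x y : Fin (n - 1) × Fin n =>
      if x.1 ≠ y.1 then (1 : ℝ) else 0))
    (h034 : A 0 + A 3 + A 4 = Matrix.of (fun x y : Fin (n - 1) × Fin n =>
      if x.1 = y.1 then (1 : ℝ) else 0)) :
    ((∑ i, A i) = (Matrix.of fun _ _ => (1 : ℝ))) ∧
    ((A 1)ᵀ = A 2) ∧ ((A 3)ᵀ = A 3) ∧ ((A 4)ᵀ = A 4) ∧
    (∀ i j, ∃ p : Fin 5 → ℕ, A i * A j = ∑ l, (p l : ℝ) • A l) ∧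
    (∀ i j, A i * A j = A j * A i) := by
  classical
  have hz : (0:ℕ) < n := by omega
  set z0 : Fin n := ⟨0, hz⟩ with hz0def
  have hC1z : C z0 = (Matrix.of fun _ _ => (1 : ℝ)) := hC1
  have hℓ0z : ∀ i j, ℓ i j ≠ z0 := hℓ0
  -- entrywise basic facts
  have h12e : ∀ x y : Fin (n-1) × Fin n,
      A 1 x y + A 2 x y = if x.1 ≠ y.1 then (1:ℝ) else 0 := by
    intro x y
    have := congrFun (congrFun h12 x) y
    simpa using this
  have h034e : ∀ x y : Fin (n-1) × Fin n,
      A 0 x y + A 3 x y + A 4 x y = if x.1 = y.1 then (1:ℝ) else 0 := by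
    intro x y
    have := congrFun (congrFun h034 x) y
    simpa using this
  have zz : ∀ a b : ℝ, (a = 0 ∨ a = 1) → (b = 0 ∨ b = 1) → a + b = 0 → a = 0 ∧ b = 0 := by
    rintro a b (rfl|rfl) (rfl|rfl) h <;> revert h <;> norm_num
  have pick1 : ∀ a b : ℝ, (a = 0 ∨ a = 1) → (b = 0 ∨ b = 1) → a + b = 1 →
      (a = 1 ∧ b = 0) ∨ (a = 0 ∧ b = 1) := by
    rintro a b (rfl|rfl) (rfl|rfl) h
    · norm_num at h
    · right; exact ⟨rfl, rfl⟩
    · left; exact ⟨rfl, rfl⟩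
    · norm_num at h
  have L2 : ∀ x y : Fin (n-1) × Fin n, x.1 = y.1 → A 1 x y = 0 ∧ A 2 x y = 0 := by
    intro x y h
    refine zz _ _ (h01 1 x y) (h01 2 x y) ?_
    rw [h12e]; simp [h]
  have L1 : ∀ x y : Fin (n-1) × Fin n, x.1 ≠ y.1 →
      A 0 x y = 0 ∧ A 3 x y = 0 ∧ A 4 x y = 0 := by
    intro x y h
    have h0 : A 0 x y = 0 := by
      rw [hA0]; exact Matrix.one_apply_ne (fun hh => h (congrArg Prod.fst hh))
    have h34 := h034e x y
    rw [if_neg h, h0, zero_add] at h34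
    obtain ⟨h3, h4⟩ := zz _ _ (h01 3 x y) (h01 4 x y) h34
    exact ⟨h0, h3, h4⟩
  have L3 : ∀ x : Fin (n-1) × Fin n, A 3 x x = 0 ∧ A 4 x x = 0 := by
    intro x
    have h0 : A 0 x x = 1 := by rw [hA0]; exact Matrix.one_apply_eq x
    have h34 := h034e x x
    rw [if_pos rfl, h0] at h34
    have hsum : A 3 x x + A 4 x x = 0 := by linarith
    exact zz _ _ (h01 3 x x) (h01 4 x x) hsum
  have hMe : ∀ x y : Fin (n-1) × Fin n,
      M x y = A 0 x y + A 1 x y - A 2 x y + A 3 x y - A 4 x y := by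
    intro x y; rw [hdecomp]; simp [Matrix.add_apply, Matrix.sub_apply]
  have hCdiag : ∀ (i : Fin (n-1)) (a : Fin n), C (ℓ i i) a a = 1 := by
    intro i a
    have h1 := hM i i a a
    rw [if_pos (le_refl i)] at h1
    have h2 := hMe (i,a) (i,a)
    rw [h1] at h2
    have e0 : A 0 (i,a) (i,a) = 1 := by rw [hA0]; exact Matrix.one_apply_eq _
    obtain ⟨e1, e2⟩ := L2 (i,a) (i,a) rfl
    obtain ⟨e3, e4⟩ := L3 (i,a)
    rw [e0, e1, e2, e3, e4] at h2; linarith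
  have hCs : ∀ (m : Fin n) (a b : Fin n), C m b a = C m a b :=
    fun m a b => congrFun (congrFun (hsymm m) a) b
  -- the five basic matrices
  set Dm := NonsymAux.emb (NonsymAux.Df (n := n)) with hDm
  set Jm := NonsymAux.emb (NonsymAux.Jf (n := n)) with hJm
  set Sm := NonsymAux.emb (NonsymAux.Sf C ℓ) with hSm
  set Pm := NonsymAux.emb (NonsymAux.Pf C ℓ) with hPm
  -- part 1 : sum of all A's is J
  have part1 : (∑ i, A i) = (Matrix.of fun _ _ => (1:ℝ)) := by
    have hre : (∑ i, A i) = (A 0 + A 3 + A 4) + (A 1 + A 2) := by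
      rw [Fin.sum_univ_five]; abel
    rw [hre, h034, h12]
    ext x y
    by_cases h : x.1 = y.1 <;> simp [h]
  -- identification of the basic matrices with combinations of A's
  have hDmA : Dm = A 0 + A 3 + A 4 := by
    rw [h034]
    ext ⟨i,a⟩ ⟨j,b⟩
    simp only [hDm, NonsymAux.emb, NonsymAux.Df, Matrix.of_apply]
    by_cases h : i = j <;> simp [h]
  have hJmA : Jm = ∑ i, A i := by
    rw [part1]; rfl
  have hSmA : Sm = A 1 - A 2 := by
    ext ⟨i,a⟩ ⟨j,b⟩
    by_cases h : i = j
    · obtain ⟨e1, e2⟩ := L2 (i,a) (j,b) h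
      simp only [hSm, NonsymAux.emb, NonsymAux.Sf, Matrix.of_apply, if_pos h,
        Matrix.sub_apply, e1, e2, Matrix.zero_apply]
      norm_num
    · have hMab := hM i j a b
      obtain ⟨e0, e3, e4⟩ := L1 (i,a) (j,b) h
      have hd := hMe (i,a) (j,b)
      rw [e0, e3, e4] at hd
      simp only [hSm, NonsymAux.emb, NonsymAux.Sf, Matrix.of_apply, if_neg h,
        Matrix.sub_apply]
      rw [show ((if i ≤ j then C (ℓ i j) else -C (ℓ i j)) : Matrix (Fin n) (Fin n) ℝ) a b
          = (if i ≤ j then C (ℓ i j) a b else -C (ℓ i j) a b) by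
        split_ifs <;> simp [Matrix.neg_apply]]
      rw [← hMab, hd]; ring
  have hPmA : Pm = A 0 + A 3 - A 4 := by
    ext ⟨i,a⟩ ⟨j,b⟩
    by_cases h : i = j
    · subst h
      by_cases hab : a = b
      · subst hab
        obtain ⟨e3, e4⟩ := L3 (i,a)
        have e0 : A 0 (i,a) (i,a) = 1 := by rw [hA0]; exact Matrix.one_apply_eq _
        simp only [hPm, NonsymAux.emb, NonsymAux.Pf, Matrix.of_apply, eq_self_iff_true,
          if_true, Matrix.sub_apply, Matrix.add_apply, e0, e3, e4]
        rw [hCdiag i a]; norm_num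
      · have hxy : ((i,a) : Fin (n-1) × Fin n) ≠ (i,b) := by
          simp [Prod.ext_iff, hab]
        obtain ⟨e1, e2⟩ := L2 (i,a) (i,b) rfl
        have e0 : A 0 (i,a) (i,b) = 0 := by rw [hA0]; exact Matrix.one_apply_ne hxy
        have hMab := hM i i a b
        rw [if_pos (le_refl i)] at hMab
        have hd := hMe (i,a) (i,b)
        rw [e0, e1, e2] at hd
        simp only [hPm, NonsymAux.emb, NonsymAux.Pf, Matrix.of_apply, eq_self_iff_true,
          if_true, Matrix.sub_apply, Matrix.add_apply, e0, e1, e2]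
        rw [← hMab, hd]; ring
    · obtain ⟨e0, e3, e4⟩ := L1 (i,a) (j,b) h
      simp only [hPm, NonsymAux.emb, NonsymAux.Pf, Matrix.of_apply, if_neg h,
        Matrix.sub_apply, Matrix.add_apply, e0, e3, e4, Matrix.zero_apply]
      norm_num
  -- expressions of the A's
  have eA1 : A 1 = (2⁻¹ : ℝ) • (Jm - Dm + Sm) := by
    rw [hJmA, Fin.sum_univ_five, hDmA, hSmA]; module
  have eA2 : A 2 = (2⁻¹ : ℝ) • (Jm - Dm - Sm) := by
    rw [hJmA, Fin.sum_univ_five, hDmA, hSmA]; module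
  have eA3 : A 3 = (2⁻¹ : ℝ) • (Dm + Pm) - 1 := by
    rw [← hA0, hDmA, hPmA]; module
  have eA4 : A 4 = (2⁻¹ : ℝ) • (Dm - Pm) := by
    rw [hDmA, hPmA]; module
  -- transposes
  have hDmT : Dmᵀ = Dm := by
    ext ⟨i,a⟩ ⟨j,b⟩
    simp only [Matrix.transpose_apply, hDm, NonsymAux.emb, NonsymAux.Df, Matrix.of_apply]
    by_cases h : i = j
    · subst h; simp
    · simp [h, Ne.symm h]
  have hJmT : Jmᵀ = Jm := by
    ext ⟨i,a⟩ ⟨j,b⟩; rfl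
  have hPmT : Pmᵀ = Pm := by
    ext ⟨i,a⟩ ⟨j,b⟩
    simp only [Matrix.transpose_apply, hPm, NonsymAux.emb, NonsymAux.Pf, Matrix.of_apply]
    by_cases h : i = j
    · subst h; simp only [eq_self_iff_true, if_true]; exact hCs _ a b
    · simp [h, Ne.symm h]
  have hSmT : Smᵀ = -Sm := by
    ext ⟨i,a⟩ ⟨j,b⟩
    simp only [Matrix.transpose_apply, Matrix.neg_apply, hSm, NonsymAux.emb, NonsymAux.Sf,
      Matrix.of_apply]
    by_cases h : i = j
    · subst h; simp
    · rw [if_neg h, if_neg (fun hh => h hh.symm), hℓsymm j i]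
      rw [show ((if j ≤ i then C (ℓ i j) else -C (ℓ i j)) : Matrix (Fin n) (Fin n) ℝ) b a
          = (if j ≤ i then C (ℓ i j) b a else -(C (ℓ i j) b a)) by
        split_ifs <;> simp [Matrix.neg_apply]]
      rw [show (-((if i ≤ j then C (ℓ i j) else -C (ℓ i j)) : Matrix (Fin n) (Fin n) ℝ) a b)
          = (if i ≤ j then -(C (ℓ i j) a b) else C (ℓ i j) a b) by
        split_ifs <;> simp [Matrix.neg_apply]]
      rcases le_or_gt i j with h1 | h1
      · have h2 : ¬ j ≤ i := fun hh => h (le_antisymm h1 hh)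
        rw [if_neg h2, if_pos h1, hCs]
      · have h2 : ¬ i ≤ j := not_le_of_gt h1
        rw [if_pos (le_of_lt h1), if_neg h2, hCs]
  have conc2 : (A 1)ᵀ = A 2 := by
    rw [eA1, eA2, Matrix.transpose_smul, Matrix.transpose_add, Matrix.transpose_sub,
      hJmT, hDmT, hSmT]
    module
  have conc3 : (A 3)ᵀ = A 3 := by
    rw [eA3, Matrix.transpose_sub, Matrix.transpose_smul, Matrix.transpose_add,
      hDmT, hPmT, Matrix.transpose_one]
  have conc4 : (A 4)ᵀ = A 4 := by
    rw [eA4, Matrix.transpose_smul, Matrix.transpose_sub, hDmT, hPmT]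
  -- the multiplication table
  have tDD := NonsymAux.tDD (n := n)
  have tDJ := NonsymAux.tDJ (n := n)
  have tJD := NonsymAux.tJD (n := n)
  have tJJ := NonsymAux.tJJ (n := n)
  have tPD := NonsymAux.tPD C ℓ z0 hC1z horth hℓ0z
  have tDP := NonsymAux.tDP C ℓ z0 hC1z horth hℓ0z
  have tPJ := NonsymAux.tPJ C ℓ z0 hC1z horth hℓ0z
  have tJP := NonsymAux.tJP C ℓ z0 hC1z horth hℓ0z
  have tSJ := NonsymAux.tSJ C ℓ z0 hC1z horth hℓ0z
  have tJS := NonsymAux.tJS C ℓ z0 hC1z horth hℓ0z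
  have tSD := NonsymAux.tSD C ℓ z0 hC1z horth hℓ0z
  have tDS := NonsymAux.tDS C ℓ z0 hC1z horth hℓ0z
  have tPP := NonsymAux.tPP C ℓ hsq
  have tSP := NonsymAux.tSP C ℓ horth hℓsymm hℓlatin
  have tPS := NonsymAux.tPS C ℓ horth hℓsymm hℓlatin
  have tSS := NonsymAux.tSS C ℓ z0 hC1z horth hsq hsumC hℓsymm hℓlatin hℓ0z
  rw [NonsymAux.emb_If] at tSS
  -- span machinery
  set V : Submodule ℝ (Matrix (Fin (n-1) × Fin n) (Fin (n-1) × Fin n) ℝ) :=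
    Submodule.span ℝ (Set.range A) with hV
  have hAV : ∀ i, A i ∈ V := fun i => Submodule.subset_span (Set.mem_range_self i)
  have h1V : (1 : Matrix (Fin (n-1) × Fin n) (Fin (n-1) × Fin n) ℝ) ∈ V := by
    rw [← hA0]; exact hAV 0
  have hDV : Dm ∈ V := by
    rw [hDmA]; exact add_mem (add_mem (hAV 0) (hAV 3)) (hAV 4)
  have hJV : Jm ∈ V := by
    rw [hJmA]; exact Submodule.sum_mem _ fun l _ => hAV l
  have hSV : Sm ∈ V := by rw [hSmA]; exact sub_mem (hAV 1) (hAV 2)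
  have hPV : Pm ∈ V := by
    rw [hPmA]; exact sub_mem (add_mem (hAV 0) (hAV 3)) (hAV 4)
  have hgenV : ∀ X ∈ ({1, Dm, Jm, Sm, Pm} :
      Set (Matrix (Fin (n-1) × Fin n) (Fin (n-1) × Fin n) ℝ)),
      ∀ Y ∈ ({1, Dm, Jm, Sm, Pm} :
      Set (Matrix (Fin (n-1) × Fin n) (Fin (n-1) × Fin n) ℝ)), X * Y ∈ V := by
    intro X hX Y hY
    simp only [Set.mem_insert_iff, Set.mem_singleton_iff] at hX hY
    rcases hX with rfl|rfl|rfl|rfl|rfl <;> rcases hY with rfl|rfl|rfl|rfl|rfl <;>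
      simp only [one_mul, mul_one, hDm, hJm, hSm, hPm, tDD, tDJ, tJD, tJJ, tPD, tDP, tPJ, tJP, tSJ, tJS,
        tSD, tDS, tPP, tSP, tPS, tSS] <;>
      first
        | exact h1V | exact hDV | exact hJV | exact hSV | exact hPV
        | exact V.zero_mem
        | exact V.smul_mem _ h1V | exact V.smul_mem _ hDV | exact V.smul_mem _ hJV
        | exact V.smul_mem _ hSV | exact V.smul_mem _ hPV
        | exact V.sub_mem (V.add_mem (V.smul_mem _ hPV) (V.smul_mem _ hDV))
            (V.smul_mem _ h1V)
  have hgenC : ∀ X ∈ ({1, Dm, Jm, Sm, Pm} :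
      Set (Matrix (Fin (n-1) × Fin n) (Fin (n-1) × Fin n) ℝ)),
      ∀ Y ∈ ({1, Dm, Jm, Sm, Pm} :
      Set (Matrix (Fin (n-1) × Fin n) (Fin (n-1) × Fin n) ℝ)), X * Y = Y * X := by
    intro X hX Y hY
    simp only [Set.mem_insert_iff, Set.mem_singleton_iff] at hX hY
    rcases hX with rfl|rfl|rfl|rfl|rfl <;> rcases hY with rfl|rfl|rfl|rfl|rfl <;>
      simp only [one_mul, mul_one, hDm, hJm, hSm, hPm, tDD, tDJ, tJD, tJJ, tPD, tDP, tPJ, tJP, tSJ, tJS,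
        tSD, tDS, tPP, tSP, tPS, tSS]
  have hA5span : ∀ i, A i ∈ Submodule.span ℝ ({1, Dm, Jm, Sm, Pm} :
      Set (Matrix (Fin (n-1) × Fin n) (Fin (n-1) × Fin n) ℝ)) := by
    have m1 : (1 : Matrix (Fin (n-1) × Fin n) (Fin (n-1) × Fin n) ℝ) ∈
        Submodule.span ℝ ({1, Dm, Jm, Sm, Pm} :
        Set (Matrix (Fin (n-1) × Fin n) (Fin (n-1) × Fin n) ℝ)) :=
      Submodule.subset_span (by simp)
    have mD : Dm ∈ Submodule.span ℝ ({1, Dm, Jm, Sm, Pm} :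
        Set (Matrix (Fin (n-1) × Fin n) (Fin (n-1) × Fin n) ℝ)) :=
      Submodule.subset_span (by simp)
    have mJ : Jm ∈ Submodule.span ℝ ({1, Dm, Jm, Sm, Pm} :
        Set (Matrix (Fin (n-1) × Fin n) (Fin (n-1) × Fin n) ℝ)) :=
      Submodule.subset_span (by simp)
    have mS : Sm ∈ Submodule.span ℝ ({1, Dm, Jm, Sm, Pm} :
        Set (Matrix (Fin (n-1) × Fin n) (Fin (n-1) × Fin n) ℝ)) :=
      Submodule.subset_span (by simp)
    have mP : Pm ∈ Submodule.span ℝ ({1, Dm, Jm, Sm, Pm} :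
        Set (Matrix (Fin (n-1) × Fin n) (Fin (n-1) × Fin n) ℝ)) :=
      Submodule.subset_span (by simp)
    have s0 : A 0 ∈ Submodule.span ℝ ({1, Dm, Jm, Sm, Pm} :
        Set (Matrix (Fin (n-1) × Fin n) (Fin (n-1) × Fin n) ℝ)) := by
      rw [hA0]; exact m1
    have s1 : A 1 ∈ Submodule.span ℝ ({1, Dm, Jm, Sm, Pm} :
        Set (Matrix (Fin (n-1) × Fin n) (Fin (n-1) × Fin n) ℝ)) := by
      rw [eA1]; exact Submodule.smul_mem _ _ (add_mem (sub_mem mJ mD) mS)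
    have s2 : A 2 ∈ Submodule.span ℝ ({1, Dm, Jm, Sm, Pm} :
        Set (Matrix (Fin (n-1) × Fin n) (Fin (n-1) × Fin n) ℝ)) := by
      rw [eA2]; exact Submodule.smul_mem _ _ (sub_mem (sub_mem mJ mD) mS)
    have s3 : A 3 ∈ Submodule.span ℝ ({1, Dm, Jm, Sm, Pm} :
        Set (Matrix (Fin (n-1) × Fin n) (Fin (n-1) × Fin n) ℝ)) := by
      rw [eA3]; exact sub_mem (Submodule.smul_mem _ _ (add_mem mD mP)) m1
    have s4 : A 4 ∈ Submodule.span ℝ ({1, Dm, Jm, Sm, Pm} :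
        Set (Matrix (Fin (n-1) × Fin n) (Fin (n-1) × Fin n) ℝ)) := by
      rw [eA4]; exact Submodule.smul_mem _ _ (sub_mem mD mP)
    intro i; fin_cases i
    exacts [s0, s1, s2, s3, s4]
  have hprodV : ∀ i j, A i * A j ∈ V := fun i j =>
    NonsymAux.span_mul_mem _ V hgenV (hA5span i) (hA5span j)
  have conc6 : ∀ i j, A i * A j = A j * A i := fun i j =>
    NonsymAux.span_mul_comm _ hgenC (hA5span i) (hA5span j)
  -- partition into classes
  have huniq_aux : ∀ (x y : Fin (n-1) × Fin n) (l : Fin 5), A l x y = 1 →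
      (∀ m : Fin 5, m ≠ l → A m x y = 0) → ∃! l', A l' x y = 1 := by
    intro x y l hl h0
    refine ⟨l, hl, fun m hm => ?_⟩
    by_contra hne
    exact one_ne_zero (hm.symm.trans (h0 m hne))
  have hone : ∀ x y : Fin (n-1) × Fin n, ∃! l : Fin 5, A l x y = 1 := by
    intro x y
    by_cases hb : x.1 = y.1
    · by_cases hxy : x = y
      · subst hxy
        obtain ⟨e1, e2⟩ := L2 x x rfl
        obtain ⟨e3, e4⟩ := L3 x
        refine huniq_aux x x 0 (by rw [hA0]; exact Matrix.one_apply_eq x) ?_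
        intro m hm; fin_cases m
        · exact absurd rfl hm
        · exact e1
        · exact e2
        · exact e3
        · exact e4
      · obtain ⟨e1, e2⟩ := L2 x y hb
        have e0 : A 0 x y = 0 := by rw [hA0]; exact Matrix.one_apply_ne hxy
        have h34 := h034e x y
        rw [if_pos hb, e0, zero_add] at h34
        rcases pick1 _ _ (h01 3 x y) (h01 4 x y) h34 with ⟨e3, e4⟩ | ⟨e3, e4⟩
        · refine huniq_aux x y 3 e3 ?_
          intro m hm; fin_cases m
          · exact e0
          · exact e1
          · exact e2
          · exact absurd rfl hm
          · exact e4
        · refine huniq_aux x y 4 e4 ?_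
          intro m hm; fin_cases m
          · exact e0
          · exact e1
          · exact e2
          · exact e3
          · exact absurd rfl hm
    · obtain ⟨e0, e3, e4⟩ := L1 x y hb
      have h12' := h12e x y
      rw [if_pos hb] at h12'
      rcases pick1 _ _ (h01 1 x y) (h01 2 x y) h12' with ⟨e1, e2⟩ | ⟨e1, e2⟩
      · refine huniq_aux x y 1 e1 ?_
        intro m hm; fin_cases m
        · exact e0
        · exact absurd rfl hm
        · exact e2
        · exact e3
        · exact e4
      · refine huniq_aux x y 2 e2 ?_
        intro m hm; fin_cases m
        · exact e0
        · exact e1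
        · exact absurd rfl hm
        · exact e3
        · exact e4
  have hzero : ∀ (x y : Fin (n-1) × Fin n) (l : Fin 5), A l x y = 1 →
      ∀ m, m ≠ l → A m x y = 0 := by
    intro x y l hl m hm
    obtain ⟨l', hl', hu⟩ := hone x y
    have hll : l = l' := hu l hl
    rcases h01 m x y with h | h
    · exact h
    · exact absurd ((hu m h).trans hll.symm) hm
  have evalsum : ∀ (c : Fin 5 → ℝ) (x y : Fin (n-1) × Fin n) (l : Fin 5), A l x y = 1 →
      (∀ m, m ≠ l → A m x y = 0) → (∑ m, c m • A m) x y = c l := by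
    intro c x y l hl h0
    rw [Matrix.sum_apply]
    rw [Finset.sum_eq_single l]
    · rw [Matrix.smul_apply, hl, smul_eq_mul, mul_one]
    · intro m _ hm; rw [Matrix.smul_apply, h0 m hm, smul_eq_mul, mul_zero]
    · intro h; exact absurd (Finset.mem_univ l) h
  have conc5 : ∀ i j, ∃ p : Fin 5 → ℕ, A i * A j = ∑ l, (p l : ℝ) • A l := by
    intro i j
    obtain ⟨c, hc⟩ := (Submodule.mem_span_range_iff_exists_fun ℝ).1 (hprodV i j)
    have hgval : ∀ x y : Fin (n-1) × Fin n, (A i * A j) x y =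
        ((Finset.univ.filter (fun z => A i x z = 1 ∧ A j z y = 1)).card : ℝ) := by
      intro x y
      rw [Matrix.mul_apply]
      rw [Finset.sum_congr rfl (fun z _ =>
        show A i x z * A j z y = if (A i x z = 1 ∧ A j z y = 1) then (1:ℝ) else 0 by
          rcases h01 i x z with h | h <;> rcases h01 j z y with h' | h' <;> simp [h, h'])]
      rw [Finset.sum_boole]
    have hcval : ∀ (x y : Fin (n-1) × Fin n) (l : Fin 5), A l x y = 1 →
        (A i * A j) x y = c l := by
      intro x y l hl
      rw [← hc]
      exact evalsum c x y l hl (hzero x y l hl)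
    have hpexists : ∀ l : Fin 5, ∃ v : ℕ, ∀ x y : Fin (n-1) × Fin n,
        A l x y = 1 → (v : ℝ) = (A i * A j) x y := by
      intro l
      by_cases h : ∃ z : (Fin (n-1) × Fin n) × (Fin (n-1) × Fin n), A l z.1 z.2 = 1
      · obtain ⟨z, hz⟩ := h
        refine ⟨(Finset.univ.filter (fun w => A i z.1 w = 1 ∧ A j w z.2 = 1)).card, ?_⟩
        intro x y hxy
        rw [← hgval z.1 z.2, hcval z.1 z.2 l hz, hcval x y l hxy]
      · exact ⟨0, fun x y hxy => absurd ⟨(x,y), hxy⟩ h⟩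
    choose p hp using hpexists
    refine ⟨p, ?_⟩
    ext x y
    obtain ⟨l₀, hl₀, _⟩ := hone x y
    rw [evalsum (fun l => (p l : ℝ)) x y l₀ hl₀ (hzero x y l₀ hl₀)]
    exact (hp l₀ x y hl₀).symm
  exact ⟨part1, conc2, conc3, conc4, conc5, conc6⟩
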